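/- arXiv:1709.01906 — 3 statements merged into one kernel-verified Lean document; each statement's English description precedes it below -/
import Mathlib

section
/- Let q>0 and λ>0, and let g₁,g₂ ∈ L²(Ω) with g₁ ≤ g₂ a.e. in Ω. Suppose u,v ∈ X₀(Ω) satisfy ess inf_K u > 0 and ess inf_K v > 0 for every compact K ⊂ Ω, u^{-q}φ and v^{-q}φ are integrable over Ω for every φ ∈ X₀(Ω), and for every φ ∈ X₀(Ω): ∫_Ω uφ dx + λ(E(u,φ) − ∫_Ω u^{-q}φ dx) = ∫_Ω g₁φ dx and ∫_Ω vφ dx + λ(E(v,φ) − ∫_Ω v^{-q}φ dx) = ∫_Ω g₂φ dx. Then u ≤ v a.e. in Ω. -/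
open MeasureTheory Set Filter
open scoped ENNReal RealInnerProductSpace

noncomputable section

/-- Euclidean space ℝⁿ. -/
abbrev Eu (n : ℕ) : Type := EuclideanSpace ℝ (Fin n)

/-- The normalizing constant `C_n^s = π^{-n/2} 2^{2s-1} s Γ((n+2s)/2)/Γ(1-s)`. -/
def Cns (n : ℕ) (s : ℝ) : ℝ :=
  Real.pi ^ (-(n : ℝ) / 2) * (2 : ℝ) ^ (2 * s - 1) * s *
    Real.Gamma (((n : ℝ) + 2 * s) / 2) / Real.Gamma (1 - s)

/-- `Q = ℝ²ⁿ ∖ ((ℝⁿ∖Ω) × (ℝⁿ∖Ω))`. -/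
def Qset {n : ℕ} (Ω : Set (Eu n)) : Set (Eu n × Eu n) := (Ωᶜ ×ˢ Ωᶜ)ᶜ

/-- The Gagliardo kernel `(u(x)-u(y))(v(x)-v(y))/|x-y|^{n+2s}`. -/
def gKer {n : ℕ} (s : ℝ) (u v : Eu n → ℝ) (p : Eu n × Eu n) : ℝ :=
  (u p.1 - u p.2) * (v p.1 - v p.2) / dist p.1 p.2 ^ ((n : ℝ) + 2 * s)

/-- The bilinear form `E(u,v) = C_n^s ∫∫_Q (u(x)-u(y))(v(x)-v(y))/|x-y|^{n+2s}`. -/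
def bilinE {n : ℕ} (s : ℝ) (Ω : Set (Eu n)) (u v : Eu n → ℝ) : ℝ :=
  Cns n s * ∫ p in Qset Ω, gKer s u v p

/-- `‖u‖²_{X₀(Ω)}`. -/
def normX0sq {n : ℕ} (s : ℝ) (Ω : Set (Eu n)) (u : Eu n → ℝ) : ℝ := bilinE s Ω u u

/-- `‖u‖_{X₀(Ω)}`. -/
def normX0 {n : ℕ} (s : ℝ) (Ω : Set (Eu n)) (u : Eu n → ℝ) : ℝ :=
  Real.sqrt (normX0sq s Ω u)

/-- `u ∈ X₀(Ω)`: measurable, vanishing a.e. outside `Ω`, square integrable on `Ω`,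
with finite Gagliardo energy. -/
def MemX0 {n : ℕ} (s : ℝ) (Ω : Set (Eu n)) (u : Eu n → ℝ) : Prop :=
  Measurable u ∧ (∀ᵐ x : Eu n, x ∉ Ω → u x = 0) ∧
    MemLp u 2 (volume.restrict Ω) ∧ IntegrableOn (gKer s u u) (Qset Ω)

/-- `Ω` has `C²` boundary: near every boundary point, `Ω` is given by a `C²` local
defining function with nonvanishing differential. -/
def HasC2Boundary {n : ℕ} (Ω : Set (Eu n)) : Prop :=
  ∀ x ∈ frontier Ω, ∃ U : Set (Eu n), IsOpen U ∧ x ∈ U ∧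
    ∃ g : Eu n → ℝ, ContDiff ℝ 2 g ∧ (∀ y ∈ U, (y ∈ Ω ↔ g y < 0)) ∧
      ∀ y ∈ U ∩ frontier Ω, fderiv ℝ g y ≠ 0

/-- Bounded domain (open, connected, nonempty) with `C²` boundary. -/
def GoodDomain {n : ℕ} (Ω : Set (Eu n)) : Prop :=
  IsOpen Ω ∧ Bornology.IsBounded Ω ∧ IsConnected Ω ∧ HasC2Boundary Ω

/-- `δ(x) = dist(x, ∂Ω)`. -/
def bdry {n : ℕ} (Ω : Set (Eu n)) (x : Eu n) : ℝ := Metric.infDist x (frontier Ω)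

/-- `g ∈ L^∞(Ω)`. -/
def MemLinfty {n : ℕ} (Ω : Set (Eu n)) (g : Eu n → ℝ) : Prop :=
  Measurable g ∧ ∃ M : ℝ, ∀ᵐ x ∂(volume.restrict Ω), |g x| ≤ M

/-- `ess inf_K u > 0` for every compact `K ⊆ Ω`. -/
def PosOnCompacts {n : ℕ} (Ω : Set (Eu n)) (u : Eu n → ℝ) : Prop :=
  ∀ K : Set (Eu n), IsCompact K → K ⊆ Ω →
    ∃ c : ℝ, 0 < c ∧ ∀ᵐ x ∂(volume.restrict K), c ≤ u x

/-- The conical shell `𝒞` (depending on `q`, `s` and a fixed `r > diam Ω`). -/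
def InCone {n : ℕ} (s q r : ℝ) (Ω : Set (Eu n)) (v : Eu n → ℝ) : Prop :=
  MemLinfty Ω v ∧ ∃ k₁ k₂ : ℝ, 0 < k₁ ∧ 0 < k₂ ∧
    ∀ᵐ x ∂(volume.restrict Ω),
      (q < 1 → k₁ * bdry Ω x ^ s ≤ v x ∧ v x ≤ k₂ * bdry Ω x ^ s) ∧
      (q = 1 →
        k₁ * (bdry Ω x ^ s * Real.sqrt (Real.log (r / bdry Ω x ^ s))) ≤ v x ∧
        v x ≤ k₂ * (bdry Ω x ^ s * Real.sqrt (Real.log (r / bdry Ω x ^ s)))) ∧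
      (1 < q →
        k₁ * bdry Ω x ^ (2 * s / (q + 1)) ≤ v x ∧
        v x ≤ k₂ * bdry Ω x ^ (2 * s / (q + 1)))

/-- Weak solution of `(S)`: `u + λ((−Δ)^s u − u^{-q}) = g` in `Ω`, `u = 0` outside `Ω`. -/
def IsWeakSolS {n : ℕ} (s q lam : ℝ) (Ω : Set (Eu n)) (g u : Eu n → ℝ) : Prop :=
  MemX0 s Ω u ∧ PosOnCompacts Ω u ∧
    ∀ φ : Eu n → ℝ, MemX0 s Ω φ →
      IntegrableOn (fun x => u x ^ (-q) * φ x) Ω ∧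
      (∫ x in Ω, u x * φ x) + lam * (bilinE s Ω u φ - ∫ x in Ω, u x ^ (-q) * φ x) =
        ∫ x in Ω, g x * φ x

/-- `u ∈ C^α(ℝⁿ)`. -/
def HolderCα {n : ℕ} (α : ℝ) (u : Eu n → ℝ) : Prop :=
  ∃ C : ℝ, 0 < C ∧ ∀ x y : Eu n, |u x - u y| ≤ C * dist x y ^ α

/-- Hölder regularity with exponent `α = s` if `q<1`, `α = s-ε` (any small `ε>0`) if `q=1`,
and `α = 2s/(q+1)` if `q>1`. -/
def RegAlpha {n : ℕ} (s q : ℝ) (u : Eu n → ℝ) : Prop :=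
  (q < 1 → HolderCα s u) ∧
  (q = 1 → ∃ ε₀ : ℝ, 0 < ε₀ ∧ ∀ ε : ℝ, 0 < ε → ε < ε₀ → HolderCα (s - ε) u) ∧
  (1 < q → HolderCα (2 * s / (q + 1)) u)

lemma div_le_div_nn {a b d : ℝ} (h : a ≤ b) (hd : 0 ≤ d) : a / d ≤ b / d := by
  simp only [div_eq_mul_inv]
  exact mul_le_mul_of_nonneg_right h (inv_nonneg.mpr hd)

lemma posPart_mul_self_le (a b : ℝ) :
    (max a 0 - max b 0) * (max a 0 - max b 0) ≤ (a - b) * (max a 0 - max b 0) := by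
  rcases le_total a 0 with h | h <;> rcases le_total b 0 with h' | h' <;>
    simp [max_eq_right, max_eq_left, h, h'] <;> nlinarith

lemma gKer_measurable {n : ℕ} {s : ℝ} (hs : 0 ≤ (n : ℝ) + 2 * s) {u v : Eu n → ℝ}
    (hu : Measurable u) (hv : Measurable v) : Measurable (gKer s u v) := by
  unfold gKer
  exact (((hu.comp measurable_fst).sub (hu.comp measurable_snd)).mul
    ((hv.comp measurable_fst).sub (hv.comp measurable_snd))).div
    ((Real.continuous_rpow_const hs).measurable.comp measurable_dist)

lemma gKer_self_nonneg {n : ℕ} (s : ℝ) (u : Eu n → ℝ) (p : Eu n × Eu n) :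
    0 ≤ gKer s u u p :=
  div_nonneg (mul_self_nonneg _) (Real.rpow_nonneg dist_nonneg _)

lemma abs_gKer_le {n : ℕ} (s : ℝ) (u v : Eu n → ℝ) (p : Eu n × Eu n) :
    |gKer s u v p| ≤ (1/2) * (gKer s u u p + gKer s v v p) := by
  unfold gKer
  set a := u p.1 - u p.2
  set b := v p.1 - v p.2
  set d := dist p.1 p.2 ^ ((n : ℝ) + 2 * s) with hdd
  have hd : 0 ≤ d := Real.rpow_nonneg dist_nonneg _
  clear_value a b d
  rw [abs_div, abs_of_nonneg hd]
  have h1 : |a * b| ≤ (a * a + b * b) / 2 := by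
    rw [abs_mul]
    nlinarith [sq_nonneg (|a| - |b|), abs_mul_abs_self a, abs_mul_abs_self b]
  calc |a * b| / d ≤ ((a * a + b * b) / 2) / d := div_le_div_nn h1 hd
    _ = (1/2) * (a * a / d + b * b / d) := by ring

lemma Memℒp.integrable_mul' {α : Type*} [MeasurableSpace α] {μ : Measure α} {f g : α → ℝ}
    (hf : MemLp f 2 μ) (hg : MemLp g 2 μ) : Integrable (fun x => f x * g x) μ := by
  have h1 := hf.integrable_sq
  have h2 := hg.integrable_sq
  refine ((h1.add h2).const_mul ((1:ℝ)/2)).mono'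
    (hf.aestronglyMeasurable.mul hg.aestronglyMeasurable) ?_
  filter_upwards with x
  simp only [Pi.add_apply]
  rw [Real.norm_eq_abs, abs_mul]
  nlinarith [sq_nonneg (|f x| - |g x|), abs_mul_abs_self (f x), abs_mul_abs_self (g x), sq_abs (f x), sq_abs (g x)]

lemma memL2_integrable_mul {α : Type*} [MeasurableSpace α] {μ : MeasureTheory.Measure α} {f g : α → ℝ}
    (hf : MemLp f 2 μ) (hg : MemLp g 2 μ) : Integrable (fun x => f x * g x) μ := by
  have h1 := hf.integrable_sq
  have h2 := hg.integrable_sq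
  refine ((h1.add h2).const_mul ((1:ℝ)/2)).mono'
    (hf.aestronglyMeasurable.mul hg.aestronglyMeasurable) ?_
  filter_upwards with x
  simp only [Pi.add_apply]
  rw [Real.norm_eq_abs, abs_mul]
  nlinarith [sq_nonneg (|f x| - |g x|), abs_mul_abs_self (f x), abs_mul_abs_self (g x), sq_abs (f x), sq_abs (g x)]

lemma Cns_pos {n : ℕ} {s : ℝ} (hs0 : 0 < s) (hs1 : s < 1) : 0 < Cns n s := by
  have h1 : (0:ℝ) < Real.pi ^ (-(n:ℝ)/2) := Real.rpow_pos_of_pos Real.pi_pos _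
  have h2 : (0:ℝ) < (2:ℝ) ^ (2*s-1) := Real.rpow_pos_of_pos two_pos _
  have hn : (0:ℝ) ≤ (n:ℝ) := Nat.cast_nonneg n
  have h3 : 0 < Real.Gamma (((n:ℝ)+2*s)/2) := Real.Gamma_pos_of_pos (by linarith)
  have h4 : 0 < Real.Gamma (1-s) := Real.Gamma_pos_of_pos (by linarith)
  exact div_pos (mul_pos (mul_pos (mul_pos h1 h2) hs0) h3) h4

lemma pos_ae_of_posOnCompacts {n : ℕ} {Ω : Set (Eu n)} (hΩ : IsOpen Ω)
    {u : Eu n → ℝ} (hmeas : Measurable u) (h : PosOnCompacts Ω u) :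
    ∀ᵐ x ∂(volume.restrict Ω), 0 < u x := by
  set K : ℕ → Set (Eu n) := fun m =>
    Metric.closedBall 0 m ∩ ⋂ y ∈ Ωᶜ, {x | 1/((m:ℝ)+1) ≤ dist x y} with hK
  have hKclosed : ∀ m, IsClosed (⋂ y ∈ Ωᶜ, {x : Eu n | 1/((m:ℝ)+1) ≤ dist x y}) := fun m =>
    isClosed_biInter fun y _ => isClosed_le continuous_const (continuous_id.dist continuous_const)
  have hKcpt : ∀ m, IsCompact (K m) := fun m =>
    (isCompact_closedBall 0 m).inter_right (hKclosed m)
  have hKsub : ∀ m, K m ⊆ Ω := by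
    intro m x hx
    by_contra hxΩ
    have h2 := hx.2
    rw [mem_iInter₂] at h2
    have := h2 x hxΩ
    simp only [mem_setOf_eq, dist_self] at this
    have : (0:ℝ) < 1/((m:ℝ)+1) := by positivity
    linarith [h2 x hxΩ, this]
  have hcover : ∀ x ∈ Ω, ∃ m : ℕ, x ∈ K m := by
    intro x hx
    obtain ⟨ε, hε, hball⟩ := Metric.isOpen_iff.mp hΩ x hx
    obtain ⟨m₁, hm₁⟩ := exists_nat_ge (1/ε)
    obtain ⟨m₂, hm₂⟩ := exists_nat_ge ‖x‖
    refine ⟨m₁ + m₂, ?_, ?_⟩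
    · simp only [Metric.mem_closedBall, dist_zero_right]
      push_cast
      linarith [Nat.cast_nonneg (α := ℝ) m₁]
    · rw [mem_iInter₂]
      intro y hy
      simp only [mem_setOf_eq]
      have hdy : ε ≤ dist x y := by
        by_contra hlt
        push_neg at hlt
        exact hy (hball (by rwa [Metric.mem_ball, dist_comm]))
      have hm : (1:ℝ)/ε ≤ (m₁:ℝ) + (m₂:ℝ) + 1 := by
        have : (0:ℝ) ≤ (m₂:ℝ) := Nat.cast_nonneg _
        linarith
      have h1 : 1/((m₁:ℝ)+(m₂:ℝ)+1) ≤ ε := by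
        rw [div_le_iff₀ (by positivity)]
        rw [div_le_iff₀ hε] at hm
        linarith [mul_comm ε ((m₁:ℝ)+(m₂:ℝ)+1)]
      calc 1/(((m₁+m₂:ℕ):ℝ)+1) = 1/((m₁:ℝ)+(m₂:ℝ)+1) := by push_cast; ring_nf
        _ ≤ ε := h1
        _ ≤ dist x y := hdy
  have hnull : ∀ m, volume ({x | ¬ 0 < u x} ∩ K m) = 0 := by
    intro m
    obtain ⟨c, hc, hcu⟩ := h (K m) (hKcpt m) (hKsub m)
    have hm : MeasurableSet {x | ¬ c ≤ u x} :=
      (measurableSet_le measurable_const hmeas).compl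
    have h0 := ae_iff.mp hcu
    rw [Measure.restrict_apply hm] at h0
    refine measure_mono_null (fun x hx => ?_) h0
    exact ⟨fun hcle => hx.1 (lt_of_lt_of_le hc hcle), hx.2⟩
  rw [ae_restrict_iff' hΩ.measurableSet, ae_iff]
  refine measure_mono_null (fun x hx => ?_) (measure_iUnion_null hnull)
  simp only [mem_setOf_eq, Classical.not_imp] at hx
  obtain ⟨m, hm⟩ := hcover x hx.1
  exact mem_iUnion.mpr ⟨m, hx.2, hm⟩

/-- Weak comparison principle for the operator `A_λ u = u + λ((−Δ)^s u − u^{-q})`. -/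
theorem statement_0
    {n : ℕ} {s : ℝ} (hs0 : 0 < s) (hs1 : s < 1) (hns : 2 * s < (n : ℝ))
    {Ω : Set (Eu n)} (hΩ : GoodDomain Ω)
    {q lam : ℝ} (hq : 0 < q) (hlam : 0 < lam)
    {g₁ g₂ : Eu n → ℝ}
    (hg₁ : MemLp g₁ 2 (volume.restrict Ω)) (hg₂ : MemLp g₂ 2 (volume.restrict Ω))
    (hgle : ∀ᵐ x ∂(volume.restrict Ω), g₁ x ≤ g₂ x)
    {u v : Eu n → ℝ} (hu : MemX0 s Ω u) (hv : MemX0 s Ω v)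
    (hupos : PosOnCompacts Ω u) (hvpos : PosOnCompacts Ω v)
    (huint : ∀ φ : Eu n → ℝ, MemX0 s Ω φ → IntegrableOn (fun x => u x ^ (-q) * φ x) Ω)
    (hvint : ∀ φ : Eu n → ℝ, MemX0 s Ω φ → IntegrableOn (fun x => v x ^ (-q) * φ x) Ω)
    (hueq : ∀ φ : Eu n → ℝ, MemX0 s Ω φ →
      (∫ x in Ω, u x * φ x) + lam * (bilinE s Ω u φ - ∫ x in Ω, u x ^ (-q) * φ x) =
        ∫ x in Ω, g₁ x * φ x)
    (hveq : ∀ φ : Eu n → ℝ, MemX0 s Ω φ →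
      (∫ x in Ω, v x * φ x) + lam * (bilinE s Ω v φ - ∫ x in Ω, v x ^ (-q) * φ x) =
        ∫ x in Ω, g₂ x * φ x) :
    ∀ᵐ x ∂(volume.restrict Ω), u x ≤ v x := by
  classical
  -- positivity of u and v a.e. on Ω
  have hΩopen := hΩ.1
  have huae : ∀ᵐ x ∂(volume.restrict Ω), 0 < u x :=
    pos_ae_of_posOnCompacts hΩopen hu.1 hupos
  have hvae : ∀ᵐ x ∂(volume.restrict Ω), 0 < v x :=
    pos_ae_of_posOnCompacts hΩopen hv.1 hvpos
  have hexp : (0:ℝ) ≤ (n:ℝ) + 2 * s :=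
    add_nonneg (Nat.cast_nonneg n) (by linarith)
  -- the test function φ = (u - v)⁺
  set φ : Eu n → ℝ := fun x => max (u x - v x) 0 with hφdef
  have hφmeas : Measurable φ := (hu.1.sub hv.1).max measurable_const
  have hφ2 : MemLp φ 2 (volume.restrict Ω) := (hu.2.2.1.sub hv.2.2.1).pos_part
  have hφvanish : ∀ᵐ x : Eu n, x ∉ Ω → φ x = 0 := by
    filter_upwards [hu.2.1, hv.2.1] with x h1 h2 hx
    simp [hφdef, h1 hx, h2 hx]
  -- Gagliardo integrability of φ
  have hφbound : ∀ p : Eu n × Eu n,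
      gKer s φ φ p ≤ 2 * gKer s u u p + 2 * gKer s v v p := by
    intro p
    have hd : (0:ℝ) ≤ dist p.1 p.2 ^ ((n:ℝ) + 2 * s) := Real.rpow_nonneg dist_nonneg _
    have h1 : |φ p.1 - φ p.2| ≤ |(u p.1 - v p.1) - (u p.2 - v p.2)| :=
      abs_max_sub_max_le_abs _ _ _
    have h2 := mul_self_le_mul_self (abs_nonneg _) h1
    rw [abs_mul_abs_self, abs_mul_abs_self] at h2
    have hnum : (φ p.1 - φ p.2) * (φ p.1 - φ p.2) ≤
        2 * ((u p.1 - u p.2) * (u p.1 - u p.2)) +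
        2 * ((v p.1 - v p.2) * (v p.1 - v p.2)) := by
      nlinarith [h2, sq_nonneg ((u p.1 - u p.2) + (v p.1 - v p.2))]
    calc gKer s φ φ p ≤ (2 * ((u p.1 - u p.2) * (u p.1 - u p.2)) +
          2 * ((v p.1 - v p.2) * (v p.1 - v p.2))) / dist p.1 p.2 ^ ((n:ℝ) + 2 * s) :=
        div_le_div_nn hnum hd
      _ = 2 * gKer s u u p + 2 * gKer s v v p := by unfold gKer; ring
  have hφgag : IntegrableOn (gKer s φ φ) (Qset Ω) := by
    refine Integrable.mono' (((hu.2.2.2.const_mul 2).add (hv.2.2.2.const_mul 2)))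
      ((gKer_measurable hexp hφmeas hφmeas).aestronglyMeasurable) ?_
    filter_upwards with p
    rw [Real.norm_eq_abs, abs_of_nonneg (gKer_self_nonneg s φ p)]
    exact hφbound p
  have hφ : MemX0 s Ω φ := ⟨hφmeas, hφvanish, hφ2, hφgag⟩
  -- integrability of the mixed kernels
  have hmix : ∀ (w : Eu n → ℝ), MemX0 s Ω w → IntegrableOn (gKer s w φ) (Qset Ω) := by
    intro w hw
    refine Integrable.mono' ((hw.2.2.2.add hφgag).const_mul (1/2))
      ((gKer_measurable hexp hw.1 hφmeas).aestronglyMeasurable) ?_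
    filter_upwards with p
    rw [Real.norm_eq_abs]
    exact abs_gKer_le s w φ p
  have huφ := hmix u hu
  have hvφ := hmix v hv
  -- the bilinear form difference is nonnegative
  have hkey : ∀ p : Eu n × Eu n, 0 ≤ gKer s u φ p - gKer s v φ p := by
    intro p
    have hd : (0:ℝ) ≤ dist p.1 p.2 ^ ((n:ℝ) + 2 * s) := Real.rpow_nonneg dist_nonneg _
    have heq : gKer s u φ p - gKer s v φ p =
        ((u p.1 - v p.1) - (u p.2 - v p.2)) * (φ p.1 - φ p.2) /
          dist p.1 p.2 ^ ((n:ℝ) + 2 * s) := by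
      unfold gKer; ring
    rw [heq]
    refine div_nonneg ?_ hd
    have := posPart_mul_self_le (u p.1 - v p.1) (u p.2 - v p.2)
    nlinarith [mul_self_nonneg (max (u p.1 - v p.1) 0 - max (u p.2 - v p.2) 0)]
  have hEnonneg : 0 ≤ bilinE s Ω u φ - bilinE s Ω v φ := by
    unfold bilinE
    rw [← mul_sub, ← integral_sub huφ hvφ]
    refine mul_nonneg (Cns_pos hs0 hs1).le ?_
    exact integral_nonneg fun p => hkey p
  -- the zeroth order term
  have hI1 : IntegrableOn (fun x => u x * φ x) Ω := memL2_integrable_mul hu.2.2.1 hφ2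
  have hI2 : IntegrableOn (fun x => v x * φ x) Ω := memL2_integrable_mul hv.2.2.1 hφ2
  have hIdiff : (∫ x in Ω, u x * φ x) - ∫ x in Ω, v x * φ x = ∫ x in Ω, φ x ^ 2 := by
    rw [← integral_sub hI1 hI2]
    refine integral_congr_ae (Eventually.of_forall fun x => ?_)
    simp only [hφdef]
    rcases le_total (u x - v x) 0 with h | h
    · rw [max_eq_right h]; ring
    · rw [max_eq_left h]; ring
  have hAnonneg : 0 ≤ ∫ x in Ω, φ x ^ 2 := integral_nonneg fun x => sq_nonneg _
  -- the singular term
  have hS1 := huint φ hφ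
  have hS2 := hvint φ hφ
  have hSdiff : (∫ x in Ω, u x ^ (-q) * φ x) - ∫ x in Ω, v x ^ (-q) * φ x ≤ 0 := by
    rw [← integral_sub hS1 hS2]
    refine integral_nonpos_of_ae ?_
    filter_upwards [huae, hvae] with x hux hvx
    simp only [Pi.zero_apply]
    by_cases hw : u x - v x ≤ 0
    · have hz : φ x = 0 := by simp [hφdef, max_eq_right hw]
      simp [hz]
    · push_neg at hw
      have hvu : v x ≤ u x := by linarith
      have hle : u x ^ (-q) ≤ v x ^ (-q) :=
        Real.rpow_le_rpow_of_nonpos hvx hvu (by linarith)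
      have hφnn : 0 ≤ φ x := le_max_right _ _
      have heq : u x ^ (-q) * φ x - v x ^ (-q) * φ x =
          (u x ^ (-q) - v x ^ (-q)) * φ x := by ring
      rw [heq]
      exact mul_nonpos_of_nonpos_of_nonneg (sub_nonpos.mpr hle) hφnn
  -- the right-hand side
  have hg1i : IntegrableOn (fun x => g₁ x * φ x) Ω := memL2_integrable_mul hg₁ hφ2
  have hg2i : IntegrableOn (fun x => g₂ x * φ x) Ω := memL2_integrable_mul hg₂ hφ2
  have hGdiff : (∫ x in Ω, g₁ x * φ x) - ∫ x in Ω, g₂ x * φ x ≤ 0 := by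
    rw [← integral_sub hg1i hg2i]
    refine integral_nonpos_of_ae ?_
    filter_upwards [hgle] with x hx
    simp only [Pi.zero_apply]
    have heq : g₁ x * φ x - g₂ x * φ x = (g₁ x - g₂ x) * φ x := by ring
    rw [heq]
    exact mul_nonpos_of_nonpos_of_nonneg (sub_nonpos.mpr hx) (le_max_right _ _)
  -- combine the two equations
  have e1 := hueq φ hφ
  have e2 := hveq φ hφ
  have expand : ((∫ x in Ω, u x * φ x) - ∫ x in Ω, v x * φ x) +
      lam * ((bilinE s Ω u φ - bilinE s Ω v φ) -
        ((∫ x in Ω, u x ^ (-q) * φ x) - ∫ x in Ω, v x ^ (-q) * φ x)) =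
      (∫ x in Ω, g₁ x * φ x) - ∫ x in Ω, g₂ x * φ x := by
    linear_combination e1 - e2
  have hlamterm : 0 ≤ lam * ((bilinE s Ω u φ - bilinE s Ω v φ) -
      ((∫ x in Ω, u x ^ (-q) * φ x) - ∫ x in Ω, v x ^ (-q) * φ x)) :=
    mul_nonneg hlam.le (by linarith)
  have hA0 : (∫ x in Ω, φ x ^ 2) = 0 := by
    have : (∫ x in Ω, φ x ^ 2) ≤ 0 := by linarith
    linarith
  -- conclude
  have hsqint : Integrable (fun x => φ x ^ 2) (volume.restrict Ω) := hφ2.integrable_sq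
  have hzero : (fun x => φ x ^ 2) =ᵐ[volume.restrict Ω] 0 :=
    (integral_eq_zero_iff_of_nonneg (fun x => sq_nonneg (φ x)) hsqint).mp hA0
  filter_upwards [hzero] with x hx
  have hφ0 : φ x = 0 := by
    have hx' : φ x ^ 2 = 0 := hx
    exact pow_eq_zero_iff two_ne_zero |>.mp hx'
  have : u x - v x ≤ 0 := by
    by_contra hlt
    push_neg at hlt
    have : φ x = u x - v x := max_eq_left hlt.le
    rw [hφ0] at this
    linarith
  linarith
end
end

section
/- (Discrete Picone inequality, pointwise form.) Let p ∈ (1,∞). For all real numbers a, b ≥ 0 and c, d > 0: |a − b|^p − |c − d|^{p−2}(c − d)(a^p/c^{p−1} − b^p/d^{p−1}) ≥ 0, where |c − d|^{p−2}(c − d) is interpreted as 0 when c = d. -/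
/-- Key lemma: the Picone inequality in the case `d < c`. -/
lemma picone_key {p : ℝ} (hp : 1 < p) {a b c d : ℝ}
    (ha : 0 ≤ a) (hb : 0 ≤ b) (hc : 0 < c) (hd : 0 < d) (hdc : d < c) :
    (c - d) ^ (p - 1) * (a ^ p / c ^ (p - 1) - b ^ p / d ^ (p - 1)) ≤ |a - b| ^ p := by
  have hcd : (0 : ℝ) < c - d := by linarith
  have hC : (0 : ℝ) < c ^ (p - 1) := Real.rpow_pos_of_pos hc _
  have hD : (0 : ℝ) < d ^ (p - 1) := Real.rpow_pos_of_pos hd _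
  have hE : (0 : ℝ) < (c - d) ^ (p - 1) := Real.rpow_pos_of_pos hcd _
  rcases lt_or_ge a b with hab | hab
  · -- case a < b : the second factor is nonpositive
    have h1 : a ^ p / c ^ (p - 1) ≤ b ^ p / d ^ (p - 1) := by
      have h2 : a ^ p ≤ b ^ p := Real.rpow_le_rpow ha hab.le (by linarith)
      have h3 : d ^ (p - 1) ≤ c ^ (p - 1) :=
        Real.rpow_le_rpow hd.le hdc.le (by linarith)
      calc a ^ p / c ^ (p - 1) ≤ a ^ p / d ^ (p - 1) := by gcongr
        _ ≤ b ^ p / d ^ (p - 1) := by gcongr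
    have h0 : (c - d) ^ (p - 1) * (a ^ p / c ^ (p - 1) - b ^ p / d ^ (p - 1)) ≤ 0 :=
      mul_nonpos_of_nonneg_of_nonpos hE.le (by linarith)
    exact h0.trans (Real.rpow_nonneg (abs_nonneg _) p)
  · -- case b ≤ a : use convexity of x ↦ x^p
    have habs : |a - b| = a - b := abs_of_nonneg (by linarith)
    rw [habs]
    have hw1 : (0 : ℝ) ≤ (c - d) / c := by positivity
    have hw2 : (0 : ℝ) ≤ d / c := by positivity
    have hwsum : (c - d) / c + d / c = 1 := by field_simp; ring
    have hz1 : (a - b) / (c - d) ∈ Set.Ici (0 : ℝ) := by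
      exact div_nonneg (by linarith) hcd.le
    have hz2 : b / d ∈ Set.Ici (0 : ℝ) := by
      simp only [Set.mem_Ici]; positivity
    have hconv := (convexOn_rpow (le_of_lt hp)).2 hz1 hz2 hw1 hw2 hwsum
    simp only [smul_eq_mul] at hconv
    have hcomb : (c - d) / c * ((a - b) / (c - d)) + d / c * (b / d) = a / c := by
      field_simp
      ring
    rw [hcomb] at hconv
    rw [Real.div_rpow ha hc.le, Real.div_rpow (by linarith : (0:ℝ) ≤ a - b) hcd.le,
      Real.div_rpow hb hd.le] at hconv
    have hcp : c ^ p = c ^ (p - 1) * c := by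
      nth_rewrite 3 [← Real.rpow_one c]
      rw [← Real.rpow_add hc]; ring_nf
    have hdp : d ^ p = d ^ (p - 1) * d := by
      nth_rewrite 3 [← Real.rpow_one d]
      rw [← Real.rpow_add hd]; ring_nf
    have hep : (c - d) ^ p = (c - d) ^ (p - 1) * (c - d) := by
      nth_rewrite 3 [← Real.rpow_one (c - d)]
      rw [← Real.rpow_add hcd]; ring_nf
    rw [hcp, hdp, hep] at hconv
    have e1 : (c - d) / c * ((a - b) ^ p / ((c - d) ^ (p - 1) * (c - d)))
        = (a - b) ^ p / ((c - d) ^ (p - 1) * c) := by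
      field_simp
    have e2 : d / c * (b ^ p / (d ^ (p - 1) * d)) = b ^ p / (d ^ (p - 1) * c) := by
      field_simp
    rw [e1, e2] at hconv
    have h4 : a ^ p / c ^ (p - 1) ≤ (a - b) ^ p / (c - d) ^ (p - 1) + b ^ p / d ^ (p - 1) := by
      calc a ^ p / c ^ (p - 1) = (a ^ p / (c ^ (p - 1) * c)) * c := by
            field_simp
        _ ≤ ((a - b) ^ p / ((c - d) ^ (p - 1) * c) + b ^ p / (d ^ (p - 1) * c)) * c :=
            mul_le_mul_of_nonneg_right hconv hc.le
        _ = (a - b) ^ p / (c - d) ^ (p - 1) + b ^ p / d ^ (p - 1) := by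
            field_simp
    have h5 : a ^ p / c ^ (p - 1) - b ^ p / d ^ (p - 1) ≤ (a - b) ^ p / (c - d) ^ (p - 1) := by
      linarith
    calc (c - d) ^ (p - 1) * (a ^ p / c ^ (p - 1) - b ^ p / d ^ (p - 1))
        ≤ (c - d) ^ (p - 1) * ((a - b) ^ p / (c - d) ^ (p - 1)) :=
          mul_le_mul_of_nonneg_left h5 hE.le
      _ = (a - b) ^ p := by field_simp

/-- Discrete Picone inequality, pointwise form: for `p ∈ (1,∞)`, `a, b ≥ 0`, `c, d > 0`,
`|a − b|^p − |c − d|^{p−2}(c − d)(a^p/c^{p−1} − b^p/d^{p−1}) ≥ 0` (real powers;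
note that `|c − d|^{p−2}(c − d) = 0` when `c = d`). -/
theorem statement_12 {p : ℝ} (hp : 1 < p) {a b c d : ℝ}
    (ha : 0 ≤ a) (hb : 0 ≤ b) (hc : 0 < c) (hd : 0 < d) :
    0 ≤ |a - b| ^ p -
      |c - d| ^ (p - 2) * (c - d) * (a ^ p / c ^ (p - 1) - b ^ p / d ^ (p - 1)) := by
  rcases lt_trichotomy c d with h | h | h
  · -- c < d : apply key lemma with roles swapped
    have key := picone_key hp hb ha hd hc h
    have habs : |c - d| = d - c := by rw [abs_sub_comm]; exact abs_of_pos (by linarith)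
    have hpow : |c - d| ^ (p - 2) * (c - d) = -((d - c) ^ (p - 1)) := by
      rw [habs, show p - 1 = (p - 2) + 1 by ring, Real.rpow_add (by linarith : (0:ℝ) < d - c),
        Real.rpow_one]
      ring
    rw [hpow]
    rw [abs_sub_comm b a] at key
    nlinarith [key]
  · -- c = d
    subst h
    simp only [sub_self, mul_zero, zero_mul, sub_zero]
    exact Real.rpow_nonneg (abs_nonneg _) p
  · -- d < c
    have key := picone_key hp ha hb hc hd h
    have habs : |c - d| = c - d := abs_of_pos (by linarith)
    have hpow : |c - d| ^ (p - 2) * (c - d) = (c - d) ^ (p - 1) := by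
      rw [habs, show p - 1 = (p - 2) + 1 by ring, Real.rpow_add (by linarith : (0:ℝ) < c - d),
        Real.rpow_one]
    rw [hpow]
    linarith
end

section
/- Let q>0 and let g : Ω×(0,∞) → ℝ be a Carathéodory function bounded below such that y ↦ g(x,y)/y is decreasing on (0,∞) for a.e. x ∈ Ω. Let u, v ∈ L^∞(Ω) ∩ X₀(Ω) with u > 0 and v > 0 a.e. in Ω, ∫_Ω u^{1−q} dx < ∞ and ∫_Ω v^{1−q} dx < ∞, and suppose that for every φ ∈ X₀(Ω) with φ ≥ 0: E(u,φ) ≤ ∫_Ω (u^{-q} + g(x,u))φ dx and E(v,φ) ≥ ∫_Ω (v^{-q} + g(x,v))φ dx. Assume moreover there exist a measurable w : Ω → (0,∞), w ∈ L^∞(Ω), and constants c₁, c₂ > 0 with c₁w ≤ u ≤ c₂w and c₁w ≤ v ≤ c₂w a.e. in Ω, and ∫_Ω |g(x,c₁w(x))| w(x) dx < ∞ and ∫_Ω |g(x,c₂w(x))| w(x) dx < ∞. Then u ≤ v a.e. in Ω. -/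
open MeasureTheory Set Filter
open scoped ENNReal RealInnerProductSpace

noncomputable section

/-- `f : Ω × (0,∞) → ℝ` is a Carathéodory function. -/
def Caratheodory {n : ℕ} (Ω : Set (Eu n)) (f : Eu n → ℝ → ℝ) : Prop :=
  (∀ y : ℝ, Measurable fun x => f x y) ∧
    ∀ᵐ x ∂(volume.restrict Ω), ContinuousOn (f x) (Ioi 0)

/-- `f` is bounded below. -/
def BddBelowF {n : ℕ} (Ω : Set (Eu n)) (f : Eu n → ℝ → ℝ) : Prop :=
  ∃ l : ℝ, 0 ≤ l ∧ ∀ᵐ x ∂(volume.restrict Ω), ∀ y : ℝ, 0 < y → -l ≤ f x y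

/-- `f` is locally Lipschitz in the second variable, uniformly in `x ∈ Ω`. -/
def LocLipschitzUnif {n : ℕ} (Ω : Set (Eu n)) (f : Eu n → ℝ → ℝ) : Prop :=
  ∀ a b : ℝ, 0 < a → a ≤ b → ∃ L : ℝ, 0 ≤ L ∧
    ∀ᵐ x ∂(volume.restrict Ω), ∀ y₁ ∈ Icc a b, ∀ y₂ ∈ Icc a b,
      |f x y₁ - f x y₂| ≤ L * |y₁ - y₂|

/-- First eigenvalue `λ₁^s(Ω)` of `(−Δ)^s` with Dirichlet condition. -/
def lambda1 {n : ℕ} (s : ℝ) (Ω : Set (Eu n)) : ℝ :=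
  sInf {c : ℝ | ∃ u : Eu n → ℝ, MemX0 s Ω u ∧ (0 < ∫ x in Ω, (u x) ^ 2) ∧
    c = normX0sq s Ω u / ∫ x in Ω, (u x) ^ 2}

/-- `f(x,y) ≤ μ y + l` with `0 ≤ μ < λ₁^s(Ω)`, `l ≥ 0` (the condition
`limsup_{y→∞} f(x,y)/y < λ₁^s(Ω)` uniformly in `x`). -/
def UpperLinear {n : ℕ} (s : ℝ) (Ω : Set (Eu n)) (f : Eu n → ℝ → ℝ) (μ l : ℝ) : Prop :=
  0 ≤ μ ∧ μ < lambda1 s Ω ∧ 0 ≤ l ∧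
    ∀ᵐ x ∂(volume.restrict Ω), ∀ y : ℝ, 0 < y → f x y ≤ μ * y + l

/-- Weak solution of `(Q^s)`: `(−Δ)^s u − u^{-q} = f(x,u)` in `Ω`, `u = 0` outside `Ω`. -/
def IsWeakSolQ {n : ℕ} (s q : ℝ) (Ω : Set (Eu n)) (f : Eu n → ℝ → ℝ) (u : Eu n → ℝ) : Prop :=
  MemX0 s Ω u ∧ PosOnCompacts Ω u ∧
    ∀ φ : Eu n → ℝ, MemX0 s Ω φ →
      IntegrableOn (fun x => u x ^ (-q) * φ x) Ω ∧
      IntegrableOn (fun x => f x (u x) * φ x) Ω ∧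
      bilinE s Ω u φ - (∫ x in Ω, u x ^ (-q) * φ x) = ∫ x in Ω, f x (u x) * φ x

namespace CompAux

def hfun (a c : ℝ) : ℝ := max (a^2 - c^2) 0 / |a|

def kfun (a c : ℝ) : ℝ := max (a^2 - c^2) 0 / |c|

theorem hfun_nonneg (a c : ℝ) : 0 ≤ hfun a c :=
  div_nonneg (le_max_right _ _) (abs_nonneg _)

theorem kfun_nonneg (a c : ℝ) : 0 ≤ kfun a c :=
  div_nonneg (le_max_right _ _) (abs_nonneg _)

theorem hfun_of_pos {a : ℝ} (c : ℝ) (ha : 0 < a) : hfun a c = max (a^2 - c^2) 0 / a := by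
  rw [hfun, abs_of_pos ha]

theorem kfun_of_pos (a : ℝ) {c : ℝ} (hc : 0 < c) : kfun a c = max (a^2 - c^2) 0 / c := by
  rw [kfun, abs_of_pos hc]

theorem hfun_zero (c : ℝ) : hfun 0 c = 0 := by
  have h : (0:ℝ)^2 - c^2 ≤ 0 := by nlinarith [sq_nonneg c]
  rw [hfun, max_eq_right h, zero_div]

theorem kfun_zero (c : ℝ) : kfun 0 c = 0 := by
  have h : (0:ℝ)^2 - c^2 ≤ 0 := by nlinarith [sq_nonneg c]
  rw [kfun, max_eq_right h, zero_div]

theorem hfun_le_abs (a c : ℝ) : hfun a c ≤ |a| := by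
  rcases eq_or_lt_of_le (abs_nonneg a) with h | h
  · simp [hfun, ← h]
  · rw [hfun, div_le_iff₀ h]
    have h2 : |a| * |a| = a ^ 2 := by rw [← sq_abs a]; ring
    rw [h2]
    exact max_le (by nlinarith [sq_nonneg c]) (sq_nonneg a)

theorem kfun_le {K a c : ℝ} (ha : 0 ≤ a) (hc : 0 ≤ c) (hac : a ≤ K * c) (hK : 0 ≤ K) :
    kfun a c ≤ K * a := by
  rcases eq_or_lt_of_le hc with h | h
  · have ha0 : a = 0 := le_antisymm (by simpa [← h] using hac) ha
    simp [kfun, ← h, ha0]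
  · rw [kfun_of_pos _ h, div_le_iff₀ h]
    refine max_le (by nlinarith) (by positivity)

theorem hfun_sub_le {a b : ℝ} (ha : 0 ≤ a) (hb : 0 ≤ b) (c d : ℝ) :
    hfun a c - hfun b d ≤ 2 * |a - b| + 2 * |c - d| := by
  have hRHS : (0:ℝ) ≤ 2 * |a - b| + 2 * |c - d| := by positivity
  by_cases hac : a ^ 2 - c ^ 2 ≤ 0
  · have h1 : hfun a c = 0 := by rw [hfun, max_eq_right hac, zero_div]
    have := hfun_nonneg b d; linarith
  push_neg at hac
  have ha' : 0 < a := by nlinarith [sq_nonneg c]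
  have hca : |c| < a := by nlinarith [sq_abs c, abs_nonneg c]
  rw [hfun_of_pos _ ha', max_eq_left hac.le]
  by_cases hbd : b ^ 2 - d ^ 2 ≤ 0 ∨ b = 0
  · have h2 : hfun b d = 0 := by
      rcases hbd with h | h
      · rw [hfun, max_eq_right h, zero_div]
      · simp [hfun, h]
    rw [h2, sub_zero]
    have hbd' : b ≤ |d| := by
      rcases hbd with h | h
      · nlinarith [sq_abs d, abs_nonneg d]
      · simp [h, abs_nonneg d]
    have key : (a^2 - c^2)/a ≤ 2*(a - |c|) := by
      rw [div_le_iff₀ ha']; nlinarith [sq_abs c, sq_nonneg (a - |c|)]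
    have h3 : |d| - |c| ≤ |d - c| := abs_sub_abs_le_abs_sub d c
    have h4 : a - b ≤ |a - b| := le_abs_self _
    have h5 : |d - c| = |c - d| := abs_sub_comm d c
    linarith
  · push_neg at hbd
    obtain ⟨hbd1, hb0⟩ := hbd
    have hb' : 0 < b := lt_of_le_of_ne hb (Ne.symm hb0)
    have hdb : |d| < b := by nlinarith [sq_abs d, abs_nonneg d]
    rw [hfun_of_pos _ hb', max_eq_left hbd1.le]
    rw [div_sub_div _ _ (ne_of_gt ha') (ne_of_gt hb'), div_le_iff₀ (mul_pos ha' hb')]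
    have habs1 : |d| - |c| ≤ |c - d| := by
      have := abs_sub_abs_le_abs_sub d c
      have h5 : |d - c| = |c - d| := abs_sub_comm d c
      linarith
    rcases le_total a b with hab | hab
    · have key2 : d^2 - c^2 ≤ 2*b*|c - d| := by
        nlinarith [abs_nonneg (c - d), sq_abs c, sq_abs d, abs_nonneg c, abs_nonneg d]
      nlinarith [mul_nonneg (sub_nonneg.2 hab) (by positivity : (0:ℝ) ≤ a*b + c^2),
        mul_le_mul_of_nonneg_left key2 ha'.le,
        mul_nonneg (abs_nonneg (a-b)) (mul_pos ha' hb').le,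
        abs_nonneg (c - d), mul_pos ha' hb']
    · have key2 : d^2 - c^2 ≤ 2*a*|c - d| := by
        nlinarith [abs_nonneg (c - d), sq_abs c, sq_abs d, abs_nonneg c, abs_nonneg d]
      nlinarith [mul_le_mul_of_nonneg_left key2 hb'.le,
        mul_le_mul_of_nonneg_left (by nlinarith [sq_abs d] : d^2 ≤ a*b) (sub_nonneg.2 hab),
        mul_le_mul_of_nonneg_right (le_abs_self (a-b)) (mul_pos ha' hb').le,
        abs_nonneg (c - d), mul_pos ha' hb']

set_option maxHeartbeats 1000000 in
theorem kfun_sub_le {K a b c d : ℝ} (hK : 1 ≤ K) (ha : 0 ≤ a) (hc : 0 ≤ c) (hac : a ≤ K * c)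
    (hb : 0 ≤ b) (hd : 0 ≤ d) (hbd : b ≤ K * d) :
    kfun a c - kfun b d ≤ (K^2 + K + 1) * (|a - b| + |c - d|) := by
  have hK0 : (0:ℝ) < K := by linarith
  have hRHS : (0:ℝ) ≤ (K^2 + K + 1) * (|a - b| + |c - d|) := by positivity
  by_cases hac2 : a ^ 2 - c ^ 2 ≤ 0
  · have h1 : kfun a c = 0 := by rw [kfun, max_eq_right hac2, zero_div]
    have := kfun_nonneg b d; linarith
  push_neg at hac2
  have hca : c < a := by nlinarith
  have hc' : 0 < c := by
    rcases eq_or_lt_of_le hc with h | h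
    · exfalso; rw [← h] at hac; nlinarith
    · exact h
  have ha' : 0 < a := lt_trans hc' hca
  rw [kfun_of_pos _ hc', max_eq_left hac2.le]
  by_cases hbd2 : b ^ 2 - d ^ 2 ≤ 0
  · have h2 : kfun b d = 0 := by rw [kfun, max_eq_right hbd2, zero_div]
    rw [h2, sub_zero, div_le_iff₀ hc']
    have hbled : b ≤ d := by nlinarith
    have h6 : a - c ≤ |a - b| + |c - d| := by
      have h4 : a - b ≤ |a - b| := le_abs_self _
      have h5 : d - c ≤ |c - d| := by rw [abs_sub_comm]; exact le_abs_self _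
      linarith
    have h7 : a + c ≤ (K+1)*c := by linarith
    nlinarith [mul_le_mul h6 h7 (by linarith) (by positivity),
      mul_nonneg (mul_nonneg (sq_nonneg K) hc) (by positivity : (0:ℝ) ≤ |a - b| + |c - d|)]
  push_neg at hbd2
  have hdb : d < b := by nlinarith
  have hd' : 0 < d := by
    rcases eq_or_lt_of_le hd with h | h
    · exfalso; rw [← h] at hbd; nlinarith
    · exact h
  have hb' : 0 < b := lt_trans hd' hdb
  rw [kfun_of_pos _ hd', max_eq_left hbd2.le]
  rw [div_sub_div _ _ (ne_of_gt hc') (ne_of_gt hd'), div_le_iff₀ (mul_pos hc' hd')]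
  have habK : a + b ≤ K * (c + d) := by linarith
  have hab_abs : (a - b) * (a + b) ≤ |a - b| * (K * (c + d)) := by
    calc (a - b) * (a + b) ≤ |a - b| * (a + b) :=
          mul_le_mul_of_nonneg_right (le_abs_self _) (by linarith)
      _ ≤ |a - b| * (K * (c + d)) := mul_le_mul_of_nonneg_left habK (abs_nonneg _)
  have hint1 : 0 ≤ (K - 1)^2 * |a - b| * (c * d) :=
    mul_nonneg (mul_nonneg (sq_nonneg _) (abs_nonneg _)) (mul_pos hc' hd').le
  have hint2 : 0 ≤ K * |c - d| * (c * d) :=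
    mul_nonneg (mul_nonneg hK0.le (abs_nonneg _)) (mul_pos hc' hd').le
  have hint3 : 0 ≤ K * |a - b| * (c * d) :=
    mul_nonneg (mul_nonneg hK0.le (abs_nonneg _)) (mul_pos hc' hd').le
  rcases le_total c d with hcd | hcd
  · have hdc : d - c = |c - d| := by rw [abs_sub_comm, abs_of_nonneg (by linarith)]
    have e1 : (d - c) * (a^2 + c*d) ≤ |c - d| * ((K^2 + 1) * (c*d)) := by
      rw [← hdc]
      apply mul_le_mul_of_nonneg_left _ (by linarith)
      nlinarith [mul_le_mul hac hac ha (by positivity : (0:ℝ) ≤ K*c),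
        mul_le_mul_of_nonneg_left hcd (by positivity : (0:ℝ) ≤ K^2*c)]
    have e2 : c * ((a - b) * (a + b)) ≤ |a - b| * (2*K*(c*d)) := by
      have t1 : c * ((a - b) * (a + b)) ≤ c * (|a - b| * (K * (c + d))) :=
        mul_le_mul_of_nonneg_left hab_abs hc
      have t2 : c * (c + d) ≤ 2 * (c * d) := by nlinarith [mul_le_mul_of_nonneg_left hcd hc]
      nlinarith [mul_le_mul_of_nonneg_left t2 (mul_nonneg (abs_nonneg (a - b)) hK0.le)]
    nlinarith [hint1, hint2, hint3, e1, e2]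
  · have e1 : (d - c) * (b^2 + c*d) ≤ 0 :=
      mul_nonpos_of_nonpos_of_nonneg (by linarith) (by positivity)
    have e2 : d * ((a - b) * (a + b)) ≤ |a - b| * (2*K*(c*d)) := by
      have t1 : d * ((a - b) * (a + b)) ≤ d * (|a - b| * (K * (c + d))) :=
        mul_le_mul_of_nonneg_left hab_abs hd
      have t2 : d * (c + d) ≤ 2 * (c * d) := by nlinarith [mul_le_mul_of_nonneg_left hcd hd]
      nlinarith [mul_le_mul_of_nonneg_left t2 (mul_nonneg (abs_nonneg (a - b)) hK0.le)]
    nlinarith [hint1, hint2, hint3, e1, e2]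

set_option maxHeartbeats 1000000 in
theorem keyG {a b c d : ℝ}
    (h1 : (0 < a ∧ 0 < c) ∨ (a = 0 ∧ c = 0)) (h2 : (0 < b ∧ 0 < d) ∨ (b = 0 ∧ d = 0)) :
    0 ≤ (a - b) * (hfun a c - hfun b d) - (c - d) * (kfun a c - kfun b d) := by
  rcases h1 with ⟨ha, hc⟩ | ⟨ha, hc⟩
  · rcases h2 with ⟨hb, hd⟩ | ⟨hb, hd⟩
    · have ha' := ne_of_gt ha; have hb' := ne_of_gt hb
      have hc' := ne_of_gt hc; have hd' := ne_of_gt hd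
      rw [hfun_of_pos _ ha, hfun_of_pos _ hb, kfun_of_pos _ hc, kfun_of_pos _ hd]
      by_cases m1 : a^2 - c^2 ≤ 0 <;> by_cases m2 : b^2 - d^2 ≤ 0
      · rw [max_eq_right m1, max_eq_right m2]; simp
      · push_neg at m2
        rw [max_eq_right m1, max_eq_left m2.le]
        have key : (a - b) * (0/a - (b^2 - d^2)/b) - (c - d) * (0/c - (b^2 - d^2)/d)
            = (b^2 - d^2) * (c*b - a*d) / (b*d) := by
          field_simp; ring
        rw [key]
        have hac : a ≤ c := by nlinarith
        have hdb : d ≤ b := by nlinarith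
        have : 0 ≤ c*b - a*d := by nlinarith
        exact div_nonneg (mul_nonneg m2.le this) (by positivity)
      · push_neg at m1
        rw [max_eq_left m1.le, max_eq_right m2]
        have key : (a - b) * ((a^2 - c^2)/a - 0/b) - (c - d) * ((a^2 - c^2)/c - 0/d)
            = (a^2 - c^2) * (a*d - b*c) / (a*c) := by
          field_simp; ring
        rw [key]
        have hca : c ≤ a := by nlinarith
        have hbd : b ≤ d := by nlinarith
        have : 0 ≤ a*d - b*c := by nlinarith
        exact div_nonneg (mul_nonneg m1.le this) (by positivity)
      · push_neg at m1; push_neg at m2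
        rw [max_eq_left m1.le, max_eq_left m2.le]
        have key : (a - b) * ((a^2 - c^2)/a - (b^2 - d^2)/b)
              - (c - d) * ((a^2 - c^2)/c - (b^2 - d^2)/d)
            = (a*d - b*c)^2 * (c*d + a*b) / (a*b*(c*d)) := by
          field_simp; ring
        rw [key]
        exact div_nonneg (mul_nonneg (sq_nonneg _) (by positivity)) (by positivity)
    · obtain rfl := hb; obtain rfl := hd
      have ha' := ne_of_gt ha; have hc' := ne_of_gt hc
      rw [hfun_zero, kfun_zero, hfun_of_pos _ ha, kfun_of_pos _ hc]
      have key : (a - 0) * (max (a^2 - c^2) 0 / a - 0) - (c - 0) * (max (a^2 - c^2) 0 / c - 0)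
          = 0 := by field_simp; ring
      rw [key]
  · rcases h2 with ⟨hb, hd⟩ | ⟨hb, hd⟩
    · obtain rfl := ha; obtain rfl := hc
      have hb' := ne_of_gt hb; have hd' := ne_of_gt hd
      rw [hfun_zero, kfun_zero, hfun_of_pos _ hb, kfun_of_pos _ hd]
      have key : (0 - b) * (0 - max (b^2 - d^2) 0 / b) - (0 - d) * (0 - max (b^2 - d^2) 0 / d)
          = 0 := by field_simp; ring
      rw [key]
    · obtain rfl := ha; obtain rfl := hc; obtain rfl := hb; obtain rfl := hd
      simp [hfun_zero, kfun_zero]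

theorem div_mono_num {x y k : ℝ} (hk : 0 ≤ k) (h : x ≤ y) : x / k ≤ y / k := by
  rcases eq_or_lt_of_le hk with h0 | h0
  · rw [← h0]; simp
  · exact (div_le_div_iff_of_pos_right h0).2 h

theorem gKer_self_nonneg {n : ℕ} (s : ℝ) (u : Eu n → ℝ) (p : Eu n × Eu n) :
    0 ≤ gKer s u u p :=
  div_nonneg (mul_self_nonneg _) (Real.rpow_nonneg dist_nonneg _)

theorem gKer_measurable {n : ℕ} (s : ℝ) {u v : Eu n → ℝ} (hu : Measurable u)
    (hv : Measurable v) : Measurable (gKer s u v) := by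
  apply Measurable.div
  · exact ((hu.comp measurable_fst).sub (hu.comp measurable_snd)).mul
      ((hv.comp measurable_fst).sub (hv.comp measurable_snd))
  · exact measurable_dist.pow_const _

theorem abs_gKer_le {n : ℕ} (s : ℝ) (u v : Eu n → ℝ) (p : Eu n × Eu n) :
    |gKer s u v p| ≤ gKer s u u p + gKer s v v p := by
  unfold gKer
  have hk0 : 0 ≤ dist p.1 p.2 ^ ((n:ℝ) + 2*s) := Real.rpow_nonneg dist_nonneg _
  rw [← add_div, abs_div, abs_of_nonneg hk0]
  apply div_mono_num hk0
  rw [abs_mul]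
  nlinarith [sq_nonneg (|u p.1 - u p.2| - |v p.1 - v p.2|), sq_abs (u p.1 - u p.2),
    sq_abs (v p.1 - v p.2), abs_nonneg (u p.1 - u p.2), abs_nonneg (v p.1 - v p.2)]

theorem ae_pair {α : Type*} [MeasureSpace α] [SFinite (volume : Measure α)] {P : α → Prop}
    (h : ∀ᵐ x : α, P x) : ∀ᵐ p : α × α, P p.1 ∧ P p.2 := by
  rw [ae_iff] at h ⊢
  apply measure_mono_null
    (show {p : α × α | ¬(P p.1 ∧ P p.2)} ⊆ ((toMeasurable volume {x | ¬ P x}) ×ˢ univ) ∪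
      (univ ×ˢ (toMeasurable volume {x | ¬ P x})) from ?_)
  · apply measure_union_null
    · rw [Measure.volume_eq_prod, Measure.prod_prod, measure_toMeasurable, h, zero_mul]
    · rw [Measure.volume_eq_prod, Measure.prod_prod, measure_toMeasurable, h, mul_zero]
  · intro p hp
    simp only [mem_setOf_eq, not_and_or] at hp
    rcases hp with hp | hp
    · exact Or.inl ⟨subset_toMeasurable _ _ hp, mem_univ _⟩
    · exact Or.inr ⟨mem_univ _, subset_toMeasurable _ _ hp⟩

end CompAux
set_option maxHeartbeats 2000000 in
/-- Weak comparison principle between sub- and supersolutions of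
`(−Δ)^s w = w^{-q} + g(x,w)`. -/
theorem statement_14
    {n : ℕ} {s : ℝ} (hs0 : 0 < s) (hs1 : s < 1) (hns : 2 * s < (n : ℝ))
    {Ω : Set (Eu n)} (hΩ : GoodDomain Ω)
    {q : ℝ} (hq : 0 < q)
    {g : Eu n → ℝ → ℝ} (hcar : Caratheodory Ω g) (hbdd : BddBelowF Ω g)
    (hdec : ∀ᵐ x ∂(volume.restrict Ω), ∀ y₁ y₂ : ℝ, 0 < y₁ → y₁ < y₂ →
      g x y₂ / y₂ < g x y₁ / y₁)
    {u v : Eu n → ℝ} (huX : MemX0 s Ω u) (hvX : MemX0 s Ω v)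
    (huB : MemLinfty Ω u) (hvB : MemLinfty Ω v)
    (hupos : ∀ᵐ x ∂(volume.restrict Ω), 0 < u x)
    (hvpos : ∀ᵐ x ∂(volume.restrict Ω), 0 < v x)
    (huint : IntegrableOn (fun x => u x ^ (1 - q)) Ω)
    (hvint : IntegrableOn (fun x => v x ^ (1 - q)) Ω)
    (husub : ∀ φ : Eu n → ℝ, MemX0 s Ω φ → (∀ x, 0 ≤ φ x) →
      IntegrableOn (fun x => (u x ^ (-q) + g x (u x)) * φ x) Ω ∧
      bilinE s Ω u φ ≤ ∫ x in Ω, (u x ^ (-q) + g x (u x)) * φ x)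
    (hvsup : ∀ φ : Eu n → ℝ, MemX0 s Ω φ → (∀ x, 0 ≤ φ x) →
      IntegrableOn (fun x => (v x ^ (-q) + g x (v x)) * φ x) Ω ∧
      (∫ x in Ω, (v x ^ (-q) + g x (v x)) * φ x) ≤ bilinE s Ω v φ)
    {w : Eu n → ℝ} (hwmeas : Measurable w) (hwB : MemLinfty Ω w)
    (hwpos : ∀ᵐ x ∂(volume.restrict Ω), 0 < w x)
    {c₁ c₂ : ℝ} (hc₁ : 0 < c₁) (hc₂ : 0 < c₂)
    (huw : ∀ᵐ x ∂(volume.restrict Ω), c₁ * w x ≤ u x ∧ u x ≤ c₂ * w x)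
    (hvw : ∀ᵐ x ∂(volume.restrict Ω), c₁ * w x ≤ v x ∧ v x ≤ c₂ * w x)
    (hg₁ : IntegrableOn (fun x => |g x (c₁ * w x)| * w x) Ω)
    (hg₂ : IntegrableOn (fun x => |g x (c₂ * w x)| * w x) Ω) :
    ∀ᵐ x ∂(volume.restrict Ω), u x ≤ v x := by
  classical
  obtain ⟨hΩo, hΩb, hΩc, hΩr⟩ := hΩ
  have hΩm : MeasurableSet Ω := hΩo.measurableSet
  set K : ℝ := max (c₂ / c₁) 1 with hKdef
  have hK1 : (1:ℝ) ≤ K := le_max_right _ _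
  have hK0 : (0:ℝ) < K := lt_of_lt_of_le one_pos hK1
  set C : ℝ := K^2 + K + 1 with hCdef
  have hC0 : (0:ℝ) < C := by positivity
  set φ₁ : Eu n → ℝ := fun x => CompAux.hfun (u x) (v x) with hφ₁def
  set φ₂ : Eu n → ℝ := fun x => CompAux.kfun (u x) (v x) with hφ₂def
  have hum : Measurable u := huX.1
  have hvm : Measurable v := hvX.1
  have hφ₁m : Measurable φ₁ := by
    rw [hφ₁def]; unfold CompAux.hfun
    exact (((hum.pow_const 2).sub (hvm.pow_const 2)).max measurable_const).div hum.abs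
  have hφ₂m : Measurable φ₂ := by
    rw [hφ₂def]; unfold CompAux.kfun
    exact (((hum.pow_const 2).sub (hvm.pow_const 2)).max measurable_const).div hvm.abs
  -- the good set
  have hOm : ∀ᵐ x : Eu n, x ∈ Ω → (0 < u x ∧ 0 < v x ∧ u x ≤ K * v x) := by
    have h1 := (ae_restrict_iff' hΩm).1 hupos
    have h2 := (ae_restrict_iff' hΩm).1 hvpos
    have h3 := (ae_restrict_iff' hΩm).1 huw
    have h4 := (ae_restrict_iff' hΩm).1 hvw
    filter_upwards [h1, h2, h3, h4] with x a1 a2 a3 a4 hx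
    refine ⟨a1 hx, a2 hx, ?_⟩
    have e1 : u x ≤ c₂ * w x := (a3 hx).2
    have e2 : c₁ * w x ≤ v x := (a4 hx).1
    have e3 : c₂ * w x = (c₂/c₁) * (c₁ * w x) := by field_simp
    have e4 : (c₂/c₁) * (c₁ * w x) ≤ (c₂/c₁) * v x :=
      mul_le_mul_of_nonneg_left e2 (by positivity)
    have e5 : (c₂/c₁) * v x ≤ K * v x :=
      mul_le_mul_of_nonneg_right (le_max_left _ _) (a2 hx).le
    linarith
  have hGood : ∀ᵐ x : Eu n,
      ((0 < u x ∧ 0 < v x) ∨ (u x = 0 ∧ v x = 0)) ∧ 0 ≤ u x ∧ 0 ≤ v x ∧ u x ≤ K * v x := by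
    filter_upwards [hOm, huX.2.1, hvX.2.1] with x h1 h2 h3
    by_cases hx : x ∈ Ω
    · obtain ⟨e1, e2, e3⟩ := h1 hx
      exact ⟨Or.inl ⟨e1, e2⟩, e1.le, e2.le, e3⟩
    · have e1 := h2 hx; have e2 := h3 hx
      refine ⟨Or.inr ⟨e1, e2⟩, le_of_eq e1.symm, le_of_eq e2.symm, ?_⟩
      rw [e1, e2, mul_zero]
  have hGoodQ := CompAux.ae_pair hGood
  -- φ₁ ∈ X₀
  have hφ₁out : ∀ᵐ x : Eu n, x ∉ Ω → φ₁ x = 0 := by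
    filter_upwards [huX.2.1, hvX.2.1] with x h2 h3 hxo
    rw [hφ₁def]; simp only
    rw [h2 hxo, CompAux.hfun_zero]
  have hφ₂out : ∀ᵐ x : Eu n, x ∉ Ω → φ₂ x = 0 := by
    filter_upwards [huX.2.1, hvX.2.1] with x h2 h3 hxo
    rw [hφ₂def]; simp only
    rw [h2 hxo, CompAux.kfun_zero]
  have hφ₁nonneg : ∀ x, 0 ≤ φ₁ x := fun x => CompAux.hfun_nonneg _ _
  have hφ₂nonneg : ∀ x, 0 ≤ φ₂ x := fun x => CompAux.kfun_nonneg _ _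
  have hφ₁L2 : MemLp φ₁ 2 (volume.restrict Ω) := by
    apply MemLp.of_le huX.2.2.1 hφ₁m.aestronglyMeasurable
    apply Eventually.of_forall
    intro x
    rw [Real.norm_eq_abs, Real.norm_eq_abs, abs_of_nonneg (hφ₁nonneg x)]
    exact CompAux.hfun_le_abs _ _
  have hφ₂L2 : MemLp φ₂ 2 (volume.restrict Ω) := by
    apply MemLp.of_le (huX.2.2.1.const_mul K) hφ₂m.aestronglyMeasurable
    apply ae_restrict_of_ae
    filter_upwards [hGood] with x hx
    obtain ⟨-, e1, e2, e3⟩ := hx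
    rw [Real.norm_eq_abs, Real.norm_eq_abs, abs_of_nonneg (hφ₂nonneg x)]
    exact (CompAux.kfun_le e1 e2 e3 hK0.le).trans (le_abs_self _)
  have hk0 : ∀ p : Eu n × Eu n, 0 ≤ dist p.1 p.2 ^ ((n:ℝ) + 2*s) :=
    fun p => Real.rpow_nonneg dist_nonneg _
  -- Gagliardo seminorm of φ₁
  have hφ₁gag : IntegrableOn (gKer s φ₁ φ₁) (Qset Ω) := by
    apply Integrable.mono' (((huX.2.2.2.const_mul 8).add (hvX.2.2.2.const_mul 8)))
      (CompAux.gKer_measurable s hφ₁m hφ₁m).aestronglyMeasurable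
    apply ae_restrict_of_ae
    filter_upwards [hGoodQ] with p hp
    obtain ⟨⟨-, hu1, hv1, -⟩, ⟨-, hu2, hv2, -⟩⟩ := hp
    rw [Real.norm_eq_abs, abs_of_nonneg (CompAux.gKer_self_nonneg s φ₁ p)]
    have hlip : |φ₁ p.1 - φ₁ p.2| ≤ 2*|u p.1 - u p.2| + 2*|v p.1 - v p.2| := by
      rw [abs_sub_le_iff]
      constructor
      · exact CompAux.hfun_sub_le hu1 hu2 _ _
      · have h2 := CompAux.hfun_sub_le hu2 hu1 (v p.2) (v p.1)
        rw [abs_sub_comm (u p.2), abs_sub_comm (v p.2)] at h2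
        exact h2
    have hnum : (φ₁ p.1 - φ₁ p.2) * (φ₁ p.1 - φ₁ p.2)
        ≤ 8*((u p.1 - u p.2)*(u p.1 - u p.2)) + 8*((v p.1 - v p.2)*(v p.1 - v p.2)) := by
      have h3 : |φ₁ p.1 - φ₁ p.2| * |φ₁ p.1 - φ₁ p.2|
          ≤ (2*|u p.1 - u p.2| + 2*|v p.1 - v p.2|) * (2*|u p.1 - u p.2| + 2*|v p.1 - v p.2|) :=
        mul_self_le_mul_self (abs_nonneg _) hlip
      nlinarith [h3, sq_nonneg (|u p.1 - u p.2| - |v p.1 - v p.2|),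
        abs_mul_abs_self (φ₁ p.1 - φ₁ p.2), abs_mul_abs_self (u p.1 - u p.2),
        abs_mul_abs_self (v p.1 - v p.2)]
    show gKer s φ₁ φ₁ p ≤ 8 * gKer s u u p + 8 * gKer s v v p
    unfold gKer
    rw [mul_div_assoc' 8, mul_div_assoc' 8, ← add_div]
    exact CompAux.div_mono_num (hk0 p) hnum
  -- Gagliardo seminorm of φ₂
  have hφ₂gag : IntegrableOn (gKer s φ₂ φ₂) (Qset Ω) := by
    apply Integrable.mono'
      (((huX.2.2.2.const_mul (2*C^2)).add (hvX.2.2.2.const_mul (2*C^2))))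
      (CompAux.gKer_measurable s hφ₂m hφ₂m).aestronglyMeasurable
    apply ae_restrict_of_ae
    filter_upwards [hGoodQ] with p hp
    obtain ⟨⟨-, hu1, hv1, hc1⟩, ⟨-, hu2, hv2, hc2⟩⟩ := hp
    rw [Real.norm_eq_abs, abs_of_nonneg (CompAux.gKer_self_nonneg s φ₂ p)]
    have hlip : |φ₂ p.1 - φ₂ p.2| ≤ C*(|u p.1 - u p.2| + |v p.1 - v p.2|) := by
      rw [abs_sub_le_iff]
      constructor
      · exact CompAux.kfun_sub_le hK1 hu1 hv1 hc1 hu2 hv2 hc2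
      · have h2 := CompAux.kfun_sub_le hK1 hu2 hv2 hc2 hu1 hv1 hc1
        rw [abs_sub_comm (u p.2), abs_sub_comm (v p.2)] at h2
        exact h2
    have hnum : (φ₂ p.1 - φ₂ p.2) * (φ₂ p.1 - φ₂ p.2)
        ≤ (2*C^2)*((u p.1 - u p.2)*(u p.1 - u p.2))
          + (2*C^2)*((v p.1 - v p.2)*(v p.1 - v p.2)) := by
      have h3 : |φ₂ p.1 - φ₂ p.2| * |φ₂ p.1 - φ₂ p.2|
          ≤ (C*(|u p.1 - u p.2| + |v p.1 - v p.2|)) * (C*(|u p.1 - u p.2| + |v p.1 - v p.2|)) :=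
        mul_self_le_mul_self (abs_nonneg _) hlip
      nlinarith [h3, sq_nonneg (|u p.1 - u p.2| - |v p.1 - v p.2|),
        abs_mul_abs_self (φ₂ p.1 - φ₂ p.2), abs_mul_abs_self (u p.1 - u p.2),
        abs_mul_abs_self (v p.1 - v p.2), sq_nonneg C]
    show gKer s φ₂ φ₂ p ≤ (2*C^2) * gKer s u u p + (2*C^2) * gKer s v v p
    unfold gKer
    rw [mul_div_assoc' (2*C^2), mul_div_assoc' (2*C^2), ← add_div]
    exact CompAux.div_mono_num (hk0 p) hnum
  have hmem1 : MemX0 s Ω φ₁ := ⟨hφ₁m, hφ₁out, hφ₁L2, hφ₁gag⟩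
  have hmem2 : MemX0 s Ω φ₂ := ⟨hφ₂m, hφ₂out, hφ₂L2, hφ₂gag⟩
  obtain ⟨hI1, hle1⟩ := husub φ₁ hmem1 hφ₁nonneg
  obtain ⟨hI2, hle2⟩ := hvsup φ₂ hmem2 hφ₂nonneg
  -- cross-term integrability
  have hIuφ : IntegrableOn (gKer s u φ₁) (Qset Ω) := by
    apply Integrable.mono' (huX.2.2.2.add hφ₁gag)
      (CompAux.gKer_measurable s hum hφ₁m).aestronglyMeasurable
    apply Eventually.of_forall
    intro p
    rw [Real.norm_eq_abs]
    exact CompAux.abs_gKer_le s u φ₁ p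
  have hIvφ : IntegrableOn (gKer s v φ₂) (Qset Ω) := by
    apply Integrable.mono' (hvX.2.2.2.add hφ₂gag)
      (CompAux.gKer_measurable s hvm hφ₂m).aestronglyMeasurable
    apply Eventually.of_forall
    intro p
    rw [Real.norm_eq_abs]
    exact CompAux.abs_gKer_le s v φ₂ p
  -- nonnegativity of Cns
  have hCns : 0 ≤ Cns n s := by
    have hn0 : (0:ℝ) ≤ (n:ℝ) := Nat.cast_nonneg n
    unfold Cns
    apply div_nonneg
    · exact mul_nonneg (mul_nonneg (mul_nonneg (Real.rpow_nonneg Real.pi_pos.le _)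
        (Real.rpow_nonneg (by norm_num) _)) hs0.le)
        (Real.Gamma_pos_of_pos (by linarith)).le
    · exact (Real.Gamma_pos_of_pos (by linarith)).le
  -- comparison of bilinear forms via the Picone-type inequality
  have hbilin : bilinE s Ω v φ₂ ≤ bilinE s Ω u φ₁ := by
    unfold bilinE
    apply mul_le_mul_of_nonneg_left _ hCns
    rw [← sub_nonneg, ← integral_sub hIuφ hIvφ]
    apply integral_nonneg_of_ae
    apply ae_restrict_of_ae
    filter_upwards [hGoodQ] with p hp
    obtain ⟨⟨hp1, -, -, -⟩, ⟨hp2, -, -, -⟩⟩ := hp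
    simp only [Pi.zero_apply]
    show 0 ≤ gKer s u φ₁ p - gKer s v φ₂ p
    unfold gKer
    rw [div_sub_div_same]
    apply div_nonneg _ (hk0 p)
    exact CompAux.keyG hp1 hp2
  -- the function F and its sign
  have hFae : ∀ᵐ x ∂(volume.restrict Ω),
      0 ≤ (v x ^ (-q) + g x (v x)) * φ₂ x - (u x ^ (-q) + g x (u x)) * φ₁ x ∧
      (v x < u x → 0 < (v x ^ (-q) + g x (v x)) * φ₂ x - (u x ^ (-q) + g x (u x)) * φ₁ x) := by
    filter_upwards [hupos, hvpos, hdec] with x hu0 hv0 hdx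
    have hphi1 : φ₁ x = max (u x^2 - v x^2) 0 / u x := by
      rw [hφ₁def]; simp only; rw [CompAux.hfun, abs_of_pos hu0]
    have hphi2 : φ₂ x = max (u x^2 - v x^2) 0 / v x := by
      rw [hφ₂def]; simp only; rw [CompAux.kfun, abs_of_pos hv0]
    by_cases huv : u x ≤ v x
    · have hP : max (u x^2 - v x^2) 0 = 0 := max_eq_right (by nlinarith)
      have hF0 : (v x ^ (-q) + g x (v x)) * φ₂ x - (u x ^ (-q) + g x (u x)) * φ₁ x = 0 := by
        rw [hphi1, hphi2, hP]; simp
      exact ⟨le_of_eq hF0.symm, fun hlt => absurd huv (not_le.2 hlt)⟩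
    · push_neg at huv
      have hP : max (u x^2 - v x^2) 0 = u x^2 - v x^2 := max_eq_left (by nlinarith)
      have hPpos : 0 < u x^2 - v x^2 := by nlinarith
      have hd1 : u x ^ (-q) * (u x)⁻¹ < v x ^ (-q) * (v x)⁻¹ := by
        apply mul_lt_mul''
        · rw [Real.rpow_neg hu0.le, Real.rpow_neg hv0.le]
          exact inv_strictAnti₀ (Real.rpow_pos_of_pos hv0 q) (Real.rpow_lt_rpow hv0.le huv hq)
        · exact inv_strictAnti₀ hv0 huv
        · positivity
        · positivity
      have hd2 : g x (u x) / u x < g x (v x) / v x := hdx (v x) (u x) hv0 huv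
      have hkey : 0 < (v x ^ (-q) + g x (v x))/(v x) - (u x ^ (-q) + g x (u x))/(u x) := by
        rw [add_div, add_div, div_eq_mul_inv (v x ^ (-q)), div_eq_mul_inv (u x ^ (-q))]
        linarith
      have hFx : (v x ^ (-q) + g x (v x)) * φ₂ x - (u x ^ (-q) + g x (u x)) * φ₁ x
          = (u x^2 - v x^2) *
            ((v x ^ (-q) + g x (v x))/(v x) - (u x ^ (-q) + g x (u x))/(u x)) := by
        rw [hphi1, hphi2, hP]
        field_simp
      have hpos : 0 < (v x ^ (-q) + g x (v x)) * φ₂ x - (u x ^ (-q) + g x (u x)) * φ₁ x := by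
        rw [hFx]; exact mul_pos hPpos hkey
      exact ⟨hpos.le, fun _ => hpos⟩
  have hFint : IntegrableOn
      (fun x => (v x ^ (-q) + g x (v x)) * φ₂ x - (u x ^ (-q) + g x (u x)) * φ₁ x) Ω :=
    hI2.sub hI1
  have hintF : ∫ x in Ω,
      ((v x ^ (-q) + g x (v x)) * φ₂ x - (u x ^ (-q) + g x (u x)) * φ₁ x) = 0 := by
    have e0 := integral_sub hI2 hI1
    have e1 : ∫ x in Ω,
        ((v x ^ (-q) + g x (v x)) * φ₂ x - (u x ^ (-q) + g x (u x)) * φ₁ x) ≤ 0 := by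
      rw [e0]; linarith
    have e2 : 0 ≤ ∫ x in Ω,
        ((v x ^ (-q) + g x (v x)) * φ₂ x - (u x ^ (-q) + g x (u x)) * φ₁ x) :=
      integral_nonneg_of_ae (hFae.mono fun x h => h.1)
    linarith
  have hF0 := (integral_eq_zero_iff_of_nonneg_ae (hFae.mono fun x h => h.1) hFint).1 hintF
  filter_upwards [hF0, hFae] with x h0 h1
  by_contra hcon
  push_neg at hcon
  have h2 := h1.2 hcon
  have h3 : (v x ^ (-q) + g x (v x)) * φ₂ x - (u x ^ (-q) + g x (u x)) * φ₁ x = 0 := h0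
  linarith
end
end
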